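/- Let (x,p) be a feasible solution to the prize-collecting walks LP for instance (G,c̃,π̃) with root r, and let Z be a directed cycle avoiding r with all arcs of c̃-cost 0. Define, on the contraction Ḡ of Z to a supernode u_Z: x̄_{u,w}=x_{u,w} for arcs between nodes outside Z, x̄_{u,u_Z} = x(δ^out(u) ∩ δ^in(Z)), x̄_{u_Z,u} = x(δ^in(u) ∩ δ^out(Z)); p̄_u = p_u for u ∉ Z and p̄_{u_Z} = min_{v∈Z} p_v; penalties π̄_{u_Z} = Σ_{v∈Z} π̃_v, arc costs as the corresponding minima. Then (x̄,p̄) is feasible for the LP on (Ḡ,c̄,π̄) with objective value at most that of (x,p); hence OPT(Ḡ,c̄,π̄) ≤ OPT(G,c̃,π̃). -/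

import Mathlib

open Finset

/-- Feasibility for the prize-collecting walks LP. -/
def LPfeas {V : Type*} [Fintype V] [DecidableEq V]
    (A : Finset (V × V)) (r : V) (x : V → V → ℝ) (p : V → ℝ) : Prop :=
  (∀ u w, 0 ≤ x u w) ∧ (∀ u, 0 ≤ p u) ∧
  (∀ u w, (u, w) ∉ A → x u w = 0) ∧
  (∀ S : Finset V, r ∉ S → ∀ v ∈ S, 1 ≤ (∑ u ∈ Sᶜ, ∑ w ∈ S, x u w) + p v) ∧
  (∀ v, v ≠ r → (∑ u, x v u) ≤ ∑ u, x u v)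

/-- Optimal value of the prize-collecting walks LP. -/
noncomputable def lpOpt {V : Type*} [Fintype V] [DecidableEq V]
    (A : Finset (V × V)) (c : V → V → ℝ) (π : V → ℝ) (r : V) : ℝ :=
  sInf {z : ℝ | ∃ x p, LPfeas A r x p ∧
    z = (∑ u, ∑ w, c u w * x u w) + ∑ u, π u * p u}

/-- The contracted arc variables. -/
noncomputable def xbar {V : Type*} [Fintype V] [DecidableEq V]
    (uZ : V) (Z : Finset V) (x : V → V → ℝ) : V → V → ℝ :=
  fun u w =>
    if u ∈ Z then (if u = uZ ∧ w ∉ Z then ∑ z ∈ Z, x z w else 0)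
    else if w ∈ Z then (if w = uZ then ∑ z ∈ Z, x u z else 0)
    else x u w

/-- The contracted penalty variables. -/
noncomputable def pbar {V : Type*} [Fintype V] [DecidableEq V]
    (uZ : V) (Z : Finset V) (hZne : Z.Nonempty) (p : V → ℝ) : V → ℝ :=
  fun u => if u = uZ then Z.inf' hZne p else if u ∈ Z then 1 else p u

theorem lp_contract_key
    {V : Type*} [Fintype V] [DecidableEq V]
    (A Abar : Finset (V × V)) (r uZ : V) (Z : Finset V) (hZne : Z.Nonempty)
    (c cbar : V → V → ℝ) (π πbar : V → ℝ)
    (hc : ∀ u w, 0 ≤ c u w) (hπ : ∀ u, 0 ≤ π u)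
    (hrZ : r ∉ Z) (huZ : uZ ∈ Z)
    (hAbar : ∀ u w : V, (u, w) ∈ Abar ↔
      (u ∉ Z ∧ w ∉ Z ∧ (u, w) ∈ A) ∨
      (u ∉ Z ∧ w = uZ ∧ ∃ z ∈ Z, (u, z) ∈ A) ∨
      (u = uZ ∧ w ∉ Z ∧ ∃ z ∈ Z, (z, w) ∈ A))
    (hcbar1 : ∀ u w, u ∉ Z → w ∉ Z → cbar u w = c u w)
    (hcbar2 : ∀ u, u ∉ Z → ∀ h : (Z.filter fun z => (u, z) ∈ A).Nonempty,
      cbar u uZ = (Z.filter fun z => (u, z) ∈ A).inf' h fun z => c u z)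
    (hcbar3 : ∀ w, w ∉ Z → ∀ h : (Z.filter fun z => (z, w) ∈ A).Nonempty,
      cbar uZ w = (Z.filter fun z => (z, w) ∈ A).inf' h fun z => c z w)
    (hπbar1 : πbar uZ = ∑ z ∈ Z, π z)
    (hπbar2 : ∀ u, u ∉ Z → πbar u = π u)
    (hπbar3 : ∀ u ∈ Z, u ≠ uZ → πbar u = 0)
    (x : V → V → ℝ) (p : V → ℝ) (hfeas : LPfeas A r x p) :
    LPfeas Abar r (xbar uZ Z x) (pbar uZ Z hZne p) ∧
    ((∑ u, ∑ w, cbar u w * xbar uZ Z x u w) +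
      ∑ u, πbar u * pbar uZ Z hZne p u ≤
        (∑ u, ∑ w, c u w * x u w) + ∑ u, π u * p u) := by
  obtain ⟨hx0, hp0, hsupp, hcut, hflow⟩ := hfeas
  -- nonnegativity of xbar
  have hxb0 : ∀ u w, 0 ≤ xbar uZ Z x u w := by
    intro u w
    unfold xbar
    split_ifs
    · exact Finset.sum_nonneg fun z _ => hx0 z w
    · exact le_refl 0
    · exact Finset.sum_nonneg fun z _ => hx0 u z
    · exact le_refl 0
    · exact hx0 u w
  -- splitting a full sum by membership in Z
  have hfZ : Finset.univ.filter (fun u => u ∈ Z) = Z := by ext u; simp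
  have hsplitx : ∀ g : V → ℝ,
      ∑ u, g u = (∑ u ∈ Finset.univ.filter (fun u => ¬ u ∈ Z), g u) + ∑ u ∈ Z, g u := by
    intro g
    rw [← Finset.sum_filter_add_sum_filter_not Finset.univ (fun u => u ∈ Z) g, hfZ]
    ring
  -- column sums
  have hcol : ∀ (T : Finset V) (w : V), w ∉ Z → uZ ∈ T →
      ∑ u ∈ T, xbar uZ Z x u w
        = (∑ u ∈ T.filter (fun u => ¬ u ∈ Z), x u w) + ∑ z ∈ Z, x z w := by
    intro T w hw hT
    rw [← Finset.sum_filter_add_sum_filter_not T (fun u => u ∈ Z)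
      (fun u => xbar uZ Z x u w)]
    have h1 : ∑ u ∈ T.filter (fun u => u ∈ Z), xbar uZ Z x u w = ∑ z ∈ Z, x z w := by
      have e : ∀ u ∈ T.filter (fun u => u ∈ Z),
          xbar uZ Z x u w = if u = uZ then ∑ z ∈ Z, x z w else 0 := by
        intro u hu
        rw [Finset.mem_filter] at hu
        simp [xbar, hu.2, hw]
      rw [Finset.sum_congr rfl e,
        Finset.sum_ite_eq' (T.filter (fun u => u ∈ Z)) uZ (fun _ => ∑ z ∈ Z, x z w),
        if_pos (Finset.mem_filter.2 ⟨hT, huZ⟩)]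
    have h2 : ∑ u ∈ T.filter (fun u => ¬ u ∈ Z), xbar uZ Z x u w
        = ∑ u ∈ T.filter (fun u => ¬ u ∈ Z), x u w := by
      refine Finset.sum_congr rfl fun u hu => ?_
      rw [Finset.mem_filter] at hu
      simp [xbar, hu.2, hw]
    rw [h1, h2]; ring
  -- row sums
  have hrow : ∀ (T : Finset V) (u : V), u ∉ Z → uZ ∈ T →
      ∑ w ∈ T, xbar uZ Z x u w
        = (∑ w ∈ T.filter (fun w => ¬ w ∈ Z), x u w) + ∑ z ∈ Z, x u z := by
    intro T u hu hT
    rw [← Finset.sum_filter_add_sum_filter_not T (fun w => w ∈ Z)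
      (fun w => xbar uZ Z x u w)]
    have h1 : ∑ w ∈ T.filter (fun w => w ∈ Z), xbar uZ Z x u w = ∑ z ∈ Z, x u z := by
      have e : ∀ w ∈ T.filter (fun w => w ∈ Z),
          xbar uZ Z x u w = if w = uZ then ∑ z ∈ Z, x u z else 0 := by
        intro w hw
        rw [Finset.mem_filter] at hw
        simp [xbar, hw.2, hu]
      rw [Finset.sum_congr rfl e,
        Finset.sum_ite_eq' (T.filter (fun w => w ∈ Z)) uZ (fun _ => ∑ z ∈ Z, x u z),
        if_pos (Finset.mem_filter.2 ⟨hT, huZ⟩)]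
    have h2 : ∑ w ∈ T.filter (fun w => ¬ w ∈ Z), xbar uZ Z x u w
        = ∑ w ∈ T.filter (fun w => ¬ w ∈ Z), x u w := by
      refine Finset.sum_congr rfl fun w hw => ?_
      rw [Finset.mem_filter] at hw
      simp [xbar, hw.2, hu]
    rw [h1, h2]; ring
  -- Claim A : cut comparison when uZ ∉ Sb
  have claimA : ∀ Sb : Finset V, uZ ∉ Sb →
      ∑ u ∈ (Sb.filter (fun u => ¬ u ∈ Z))ᶜ, ∑ w ∈ Sb.filter (fun u => ¬ u ∈ Z), x u w
        ≤ ∑ u ∈ Sbᶜ, ∑ w ∈ Sb, xbar uZ Z x u w := by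
    intro Sb huZSb
    have hcompl' : (Sb.filter (fun u => ¬ u ∈ Z))ᶜ
        = (Sbᶜ.filter (fun u => ¬ u ∈ Z)) ∪ Z := by
      ext u
      simp only [Finset.mem_compl, Finset.mem_filter, Finset.mem_union]
      tauto
    have hdisj : Disjoint (Sbᶜ.filter (fun u => ¬ u ∈ Z)) Z := by
      rw [Finset.disjoint_left]
      intro u hu
      rw [Finset.mem_filter] at hu
      exact hu.2
    rw [Finset.sum_comm, hcompl']
    calc ∑ w ∈ Sb.filter (fun u => ¬ u ∈ Z),
            ∑ u ∈ (Sbᶜ.filter (fun u => ¬ u ∈ Z)) ∪ Z, x u w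
        = ∑ w ∈ Sb.filter (fun u => ¬ u ∈ Z), ∑ u ∈ Sbᶜ, xbar uZ Z x u w := by
          refine Finset.sum_congr rfl fun w hw => ?_
          rw [Finset.mem_filter] at hw
          rw [Finset.sum_union hdisj, hcol Sbᶜ w hw.2 (Finset.mem_compl.2 huZSb)]
      _ ≤ ∑ w ∈ Sb, ∑ u ∈ Sbᶜ, xbar uZ Z x u w := by
          refine Finset.sum_le_sum_of_subset_of_nonneg (Finset.filter_subset _ _) ?_
          exact fun w _ _ => Finset.sum_nonneg fun u _ => hxb0 u w
      _ = ∑ u ∈ Sbᶜ, ∑ w ∈ Sb, xbar uZ Z x u w := Finset.sum_comm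
  -- Claim B : cut comparison when uZ ∈ Sb
  have claimB : ∀ Sb : Finset V, uZ ∈ Sb →
      ∑ u ∈ (Sb ∪ Z)ᶜ, ∑ w ∈ Sb ∪ Z, x u w
        ≤ ∑ u ∈ Sbᶜ, ∑ w ∈ Sb, xbar uZ Z x u w := by
    intro Sb huZSb
    have hcompl' : (Sb ∪ Z)ᶜ = Sbᶜ.filter (fun u => ¬ u ∈ Z) := by
      ext u
      simp only [Finset.mem_compl, Finset.mem_filter, Finset.mem_union]
      tauto
    have hunion : Sb ∪ Z = (Sb.filter (fun u => ¬ u ∈ Z)) ∪ Z := by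
      ext u
      simp only [Finset.mem_union, Finset.mem_filter]
      tauto
    have hdisj : Disjoint (Sb.filter (fun u => ¬ u ∈ Z)) Z := by
      rw [Finset.disjoint_left]
      intro u hu
      rw [Finset.mem_filter] at hu
      exact hu.2
    rw [hcompl', hunion]
    calc ∑ u ∈ Sbᶜ.filter (fun u => ¬ u ∈ Z),
            ∑ w ∈ (Sb.filter (fun u => ¬ u ∈ Z)) ∪ Z, x u w
        = ∑ u ∈ Sbᶜ.filter (fun u => ¬ u ∈ Z), ∑ w ∈ Sb, xbar uZ Z x u w := by
          refine Finset.sum_congr rfl fun u hu => ?_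
          rw [Finset.mem_filter] at hu
          rw [Finset.sum_union hdisj, hrow Sb u hu.2 huZSb]
      _ ≤ ∑ u ∈ Sbᶜ, ∑ w ∈ Sb, xbar uZ Z x u w := by
          refine Finset.sum_le_sum_of_subset_of_nonneg (Finset.filter_subset _ _) ?_
          exact fun u _ _ => Finset.sum_nonneg fun w _ => hxb0 u w
  constructor
  · refine ⟨hxb0, ?_, ?_, ?_, ?_⟩
    · -- pbar nonneg
      intro u
      unfold pbar
      split_ifs
      · exact Finset.le_inf' hZne p fun b hb => hp0 b
      · exact zero_le_one
      · exact hp0 u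
    · -- support
      intro u w hnot
      rw [hAbar u w] at hnot
      push_neg at hnot
      obtain ⟨h1, h2, h3⟩ := hnot
      unfold xbar
      split_ifs with ha hb hc' hd
      · exact Finset.sum_eq_zero fun z hz => hsupp z w (h3 hb.1 hb.2 z hz)
      · rfl
      · exact Finset.sum_eq_zero fun z hz => hsupp u z (h2 ha hd z hz)
      · rfl
      · exact hsupp u w (h1 ha hc')
    · -- cut constraints
      intro Sb hrSb v hv
      have hsum_nn : (0:ℝ) ≤ ∑ u ∈ Sbᶜ, ∑ w ∈ Sb, xbar uZ Z x u w :=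
        Finset.sum_nonneg fun u _ => Finset.sum_nonneg fun w _ => hxb0 u w
      by_cases hvZ : v ∈ Z
      · by_cases hvuZ : v = uZ
        · -- v = uZ ∈ Sb
          rw [hvuZ] at hv ⊢
          obtain ⟨z₀, hz₀Z, hz₀⟩ := Finset.exists_mem_eq_inf' hZne p
          have hrS : r ∉ Sb ∪ Z := by
            simp only [Finset.mem_union]
            tauto
          have h := hcut (Sb ∪ Z) hrS z₀ (Finset.mem_union_right _ hz₀Z)
          have hb := claimB Sb hv
          have hpv : pbar uZ Z hZne p uZ = p z₀ := by
            unfold pbar; simp [hz₀]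
          rw [hpv]
          linarith
        · -- v ∈ Z, v ≠ uZ
          have hpv : pbar uZ Z hZne p v = 1 := by
            unfold pbar; simp [hvuZ, hvZ]
          rw [hpv]
          linarith
      · -- v ∉ Z
        have hvuZ : v ≠ uZ := fun h => hvZ (h ▸ huZ)
        have hpv : pbar uZ Z hZne p v = p v := by
          unfold pbar; simp [hvuZ, hvZ]
        rw [hpv]
        by_cases huZSb : uZ ∈ Sb
        · have hrS : r ∉ Sb ∪ Z := by
            simp only [Finset.mem_union]
            tauto
          have h := hcut (Sb ∪ Z) hrS v (Finset.mem_union_left _ hv)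
          have hb := claimB Sb huZSb
          linarith
        · have hrS : r ∉ Sb.filter (fun u => ¬ u ∈ Z) := by
            intro hr
            exact hrSb (Finset.mem_filter.1 hr).1
          have h := hcut (Sb.filter (fun u => ¬ u ∈ Z)) hrS v
            (Finset.mem_filter.2 ⟨hv, hvZ⟩)
          have hb := claimA Sb huZSb
          linarith
    · -- flow conservation
      intro v hvr
      by_cases hvZ : v ∈ Z
      · by_cases hvuZ : v = uZ
        · rw [hvuZ]
          have hout : ∑ u, xbar uZ Z x uZ u
              = ∑ u ∈ Finset.univ.filter (fun u => ¬ u ∈ Z), ∑ z ∈ Z, x z u := by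
            rw [Finset.sum_filter]
            refine Finset.sum_congr rfl fun u _ => ?_
            simp [xbar, huZ]
          have hin : ∑ u, xbar uZ Z x u uZ
              = ∑ u ∈ Finset.univ.filter (fun u => ¬ u ∈ Z), ∑ z ∈ Z, x u z := by
            rw [Finset.sum_filter]
            refine Finset.sum_congr rfl fun u _ => ?_
            by_cases hu : u ∈ Z
            · simp [xbar, hu, huZ]
            · simp [xbar, hu, huZ]
          rw [hout, hin]
          have key2 : ∀ z ∈ Z, ∑ u, x z u ≤ ∑ u, x u z :=
            fun z hz => hflow z (by rintro rfl; exact hrZ hz)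
          have hsum := Finset.sum_le_sum key2
          have e1 : ∑ z ∈ Z, (∑ u, x z u)
              = (∑ z ∈ Z, ∑ u ∈ Finset.univ.filter (fun u => ¬ u ∈ Z), x z u)
                + ∑ z ∈ Z, ∑ u ∈ Z, x z u := by
            rw [← Finset.sum_add_distrib]
            exact Finset.sum_congr rfl fun z _ => hsplitx (fun u => x z u)
          have e2 : ∑ z ∈ Z, (∑ u, x u z)
              = (∑ z ∈ Z, ∑ u ∈ Finset.univ.filter (fun u => ¬ u ∈ Z), x u z)
                + ∑ z ∈ Z, ∑ u ∈ Z, x u z := by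
            rw [← Finset.sum_add_distrib]
            exact Finset.sum_congr rfl fun z _ => hsplitx (fun u => x u z)
          have hZZ : ∑ z ∈ Z, ∑ u ∈ Z, x z u = ∑ z ∈ Z, ∑ u ∈ Z, x u z :=
            Finset.sum_comm
          have s1 : ∑ u ∈ Finset.univ.filter (fun u => ¬ u ∈ Z), ∑ z ∈ Z, x z u
              = ∑ z ∈ Z, ∑ u ∈ Finset.univ.filter (fun u => ¬ u ∈ Z), x z u :=
            Finset.sum_comm
          have s2 : ∑ u ∈ Finset.univ.filter (fun u => ¬ u ∈ Z), ∑ z ∈ Z, x u z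
              = ∑ z ∈ Z, ∑ u ∈ Finset.univ.filter (fun u => ¬ u ∈ Z), x u z :=
            Finset.sum_comm
          rw [e1, e2] at hsum
          rw [s1, s2]
          linarith
        · have h1 : ∑ u, xbar uZ Z x v u = 0 :=
            Finset.sum_eq_zero fun u _ => by simp [xbar, hvZ, hvuZ]
          rw [h1]
          exact Finset.sum_nonneg fun u _ => hxb0 u v
      · have h1 : ∑ u, xbar uZ Z x v u = ∑ u, x v u := by
          rw [hrow Finset.univ v hvZ (Finset.mem_univ uZ), hsplitx (fun u => x v u)]
        have h2 : ∑ u, xbar uZ Z x u v = ∑ u, x u v := by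
          rw [hcol Finset.univ v hvZ (Finset.mem_univ uZ), hsplitx (fun u => x u v)]
        rw [h1, h2]
        exact hflow v hvr
  · -- objective bound
    have hbd2 : ∀ u, u ∉ Z → cbar u uZ * (∑ z ∈ Z, x u z) ≤ ∑ z ∈ Z, c u z * x u z := by
      intro u hu
      by_cases hne' : (Z.filter fun z => (u, z) ∈ A).Nonempty
      · rw [hcbar2 u hu hne', Finset.mul_sum]
        refine Finset.sum_le_sum fun z hz => ?_
        by_cases hA' : (u, z) ∈ A
        · exact mul_le_mul_of_nonneg_right
            (Finset.inf'_le _ (Finset.mem_filter.2 ⟨hz, hA'⟩)) (hx0 u z)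
        · rw [hsupp u z hA', mul_zero, mul_zero]
      · have hz0 : ∀ z ∈ Z, x u z = 0 := fun z hz =>
          hsupp u z (fun hA' => hne' ⟨z, Finset.mem_filter.2 ⟨hz, hA'⟩⟩)
        rw [Finset.sum_eq_zero hz0, mul_zero]
        exact Finset.sum_nonneg fun z _ => mul_nonneg (hc u z) (hx0 u z)
    have hbd3 : ∀ w, w ∉ Z → cbar uZ w * (∑ z ∈ Z, x z w) ≤ ∑ z ∈ Z, c z w * x z w := by
      intro w hw
      by_cases hne' : (Z.filter fun z => (z, w) ∈ A).Nonempty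
      · rw [hcbar3 w hw hne', Finset.mul_sum]
        refine Finset.sum_le_sum fun z hz => ?_
        by_cases hA' : (z, w) ∈ A
        · exact mul_le_mul_of_nonneg_right
            (Finset.inf'_le _ (Finset.mem_filter.2 ⟨hz, hA'⟩)) (hx0 z w)
        · rw [hsupp z w hA', mul_zero, mul_zero]
      · have hz0 : ∀ z ∈ Z, x z w = 0 := fun z hz =>
          hsupp z w (fun hA' => hne' ⟨z, Finset.mem_filter.2 ⟨hz, hA'⟩⟩)
        rw [Finset.sum_eq_zero hz0, mul_zero]
        exact Finset.sum_nonneg fun z _ => mul_nonneg (hc z w) (hx0 z w)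
    have hcost : ∑ u, ∑ w, cbar u w * xbar uZ Z x u w ≤ ∑ u, ∑ w, c u w * x u w := by
      have hgu : ∀ u, u ∉ Z →
          ∑ w, cbar u w * xbar uZ Z x u w
            ≤ (∑ w ∈ Finset.univ.filter (fun w => ¬ w ∈ Z), c u w * x u w)
              + ∑ z ∈ Z, c u z * x u z := by
        intro u hu
        rw [hsplitx (fun w => cbar u w * xbar uZ Z x u w)]
        have e1 : ∑ w ∈ Finset.univ.filter (fun w => ¬ w ∈ Z), cbar u w * xbar uZ Z x u w
            = ∑ w ∈ Finset.univ.filter (fun w => ¬ w ∈ Z), c u w * x u w := by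
          refine Finset.sum_congr rfl fun w hw => ?_
          rw [Finset.mem_filter] at hw
          rw [hcbar1 u w hu hw.2]
          simp [xbar, hu, hw.2]
        have e2 : ∑ w ∈ Z, cbar u w * xbar uZ Z x u w = cbar u uZ * ∑ z ∈ Z, x u z := by
          rw [Finset.sum_eq_single_of_mem uZ huZ
            (fun w hw hne => by simp [xbar, hu, hw, hne])]
          simp [xbar, hu, huZ]
        rw [e1, e2]
        exact add_le_add_right (hbd2 u hu) _
      have hguZ : ∑ w, cbar uZ w * xbar uZ Z x uZ w
          ≤ ∑ w ∈ Finset.univ.filter (fun w => ¬ w ∈ Z), ∑ z ∈ Z, c z w * x z w := by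
        rw [hsplitx (fun w => cbar uZ w * xbar uZ Z x uZ w)]
        have e2 : ∑ w ∈ Z, cbar uZ w * xbar uZ Z x uZ w = 0 :=
          Finset.sum_eq_zero fun w hw => by simp [xbar, huZ, hw]
        rw [e2, add_zero]
        refine Finset.sum_le_sum fun w hw => ?_
        rw [Finset.mem_filter] at hw
        have hxw : xbar uZ Z x uZ w = ∑ z ∈ Z, x z w := by
          simp [xbar, huZ, hw.2]
        rw [hxw]
        exact hbd3 w hw.2
      have eZ : ∑ u ∈ Z, ∑ w, cbar u w * xbar uZ Z x u w
          = ∑ w, cbar uZ w * xbar uZ Z x uZ w :=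
        Finset.sum_eq_single_of_mem uZ huZ fun u hu hne =>
          Finset.sum_eq_zero fun w _ => by simp [xbar, hu, hne]
      have h2' : ∑ w ∈ Finset.univ.filter (fun w => ¬ w ∈ Z), ∑ z ∈ Z, c z w * x z w
          ≤ ∑ u ∈ Z, ∑ w, c u w * x u w := by
        rw [Finset.sum_comm]
        refine Finset.sum_le_sum fun z _ => ?_
        exact Finset.sum_le_sum_of_subset_of_nonneg (Finset.filter_subset _ _)
          fun w _ _ => mul_nonneg (hc z w) (hx0 z w)
      calc ∑ u, ∑ w, cbar u w * xbar uZ Z x u w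
          = (∑ u ∈ Finset.univ.filter (fun u => ¬ u ∈ Z),
              ∑ w, cbar u w * xbar uZ Z x u w)
            + ∑ w, cbar uZ w * xbar uZ Z x uZ w := by
            rw [hsplitx (fun u => ∑ w, cbar u w * xbar uZ Z x u w), eZ]
        _ ≤ (∑ u ∈ Finset.univ.filter (fun u => ¬ u ∈ Z),
              ((∑ w ∈ Finset.univ.filter (fun w => ¬ w ∈ Z), c u w * x u w)
                + ∑ z ∈ Z, c u z * x u z))
            + ∑ w ∈ Finset.univ.filter (fun w => ¬ w ∈ Z), ∑ z ∈ Z, c z w * x z w := by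
            refine add_le_add (Finset.sum_le_sum fun u hu => ?_) hguZ
            rw [Finset.mem_filter] at hu
            exact hgu u hu.2
        _ ≤ (∑ u ∈ Finset.univ.filter (fun u => ¬ u ∈ Z), ∑ w, c u w * x u w)
            + ∑ u ∈ Z, ∑ w, c u w * x u w := by
            refine add_le_add (le_of_eq ?_) h2'
            exact Finset.sum_congr rfl fun u _ => (hsplitx (fun w => c u w * x u w)).symm
        _ = ∑ u, ∑ w, c u w * x u w := (hsplitx (fun u => ∑ w, c u w * x u w)).symm
    have hpen : ∑ u, πbar u * pbar uZ Z hZne p u ≤ ∑ u, π u * p u := by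
      rw [hsplitx (fun u => πbar u * pbar uZ Z hZne p u), hsplitx (fun u => π u * p u)]
      have hA' : ∑ u ∈ Finset.univ.filter (fun u => ¬ u ∈ Z), πbar u * pbar uZ Z hZne p u
          = ∑ u ∈ Finset.univ.filter (fun u => ¬ u ∈ Z), π u * p u := by
        refine Finset.sum_congr rfl fun u hu => ?_
        rw [Finset.mem_filter] at hu
        have hne : u ≠ uZ := fun h => hu.2 (h ▸ huZ)
        rw [hπbar2 u hu.2]
        unfold pbar
        simp [hne, hu.2]
      have hB : ∑ u ∈ Z, πbar u * pbar uZ Z hZne p u ≤ ∑ u ∈ Z, π u * p u := by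
        have h1 : ∑ u ∈ Z, πbar u * pbar uZ Z hZne p u
            = (∑ z ∈ Z, π z) * Z.inf' hZne p := by
          rw [Finset.sum_eq_single_of_mem uZ huZ
            (fun u hu hne => by rw [hπbar3 u hu hne, zero_mul])]
          rw [hπbar1]
          unfold pbar
          simp
        rw [h1, Finset.sum_mul]
        refine Finset.sum_le_sum fun z hz => ?_
        exact mul_le_mul_of_nonneg_left (Finset.inf'_le p hz) (hπ z)
      rw [hA']
      exact add_le_add_right hB _
    exact add_le_add hcost hpen

/-- Contracting a zero-cost cycle `Z` (vertex list `L`, avoiding `r`)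
into a supernode `uZ`: the explicitly defined `(x̄, p̄)` — with
`x̄_{u,uZ} = x(δ^out(u) ∩ δ^in(Z))`, `x̄_{uZ,u} = x(δ^in(u) ∩ δ^out(Z))`,
`x̄_{u,w} = x_{u,w}` outside `Z`, `p̄_{uZ} = min_{z ∈ Z} p z`, `p̄_u = p u` outside `Z`
(deleted nodes of `Z` get `x̄ = 0`, `p̄ = 1`, penalty `0`) — is feasible for the
contracted instance with objective at most that of `(x,p)`; hence
`OPT(Ḡ,c̄,π̄) ≤ OPT(G,c̃,π̃)`. -/
theorem lp_contract_cycle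
    {V : Type*} [Fintype V] [DecidableEq V]
    (A Abar : Finset (V × V)) (r uZ : V) (Z : Finset V) (hZne : Z.Nonempty)
    (c cbar : V → V → ℝ) (π πbar : V → ℝ) (L : List V)
    (hc : ∀ u w, 0 ≤ c u w) (hπ : ∀ u, 0 ≤ π u)
    (hrZ : r ∉ Z) (huZ : uZ ∈ Z)
    (hLne : L ≠ []) (hLnd : L.Nodup) (hLZ : L.toFinset = Z)
    (hLarc : ∀ q ∈ L.zip (L.rotate 1), (q.1, q.2) ∈ A ∧ c q.1 q.2 = 0)
    (hAbar : ∀ u w : V, (u, w) ∈ Abar ↔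
      (u ∉ Z ∧ w ∉ Z ∧ (u, w) ∈ A) ∨
      (u ∉ Z ∧ w = uZ ∧ ∃ z ∈ Z, (u, z) ∈ A) ∨
      (u = uZ ∧ w ∉ Z ∧ ∃ z ∈ Z, (z, w) ∈ A))
    (hcbar1 : ∀ u w, u ∉ Z → w ∉ Z → cbar u w = c u w)
    (hcbar2 : ∀ u, u ∉ Z → ∀ h : (Z.filter fun z => (u, z) ∈ A).Nonempty,
      cbar u uZ = (Z.filter fun z => (u, z) ∈ A).inf' h fun z => c u z)
    (hcbar3 : ∀ w, w ∉ Z → ∀ h : (Z.filter fun z => (z, w) ∈ A).Nonempty,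
      cbar uZ w = (Z.filter fun z => (z, w) ∈ A).inf' h fun z => c z w)
    (hπbar1 : πbar uZ = ∑ z ∈ Z, π z)
    (hπbar2 : ∀ u, u ∉ Z → πbar u = π u)
    (hπbar3 : ∀ u ∈ Z, u ≠ uZ → πbar u = 0)
    (x : V → V → ℝ) (p : V → ℝ) (hfeas : LPfeas A r x p) :
    (LPfeas Abar r
        (fun u w =>
          if u ∈ Z then (if u = uZ ∧ w ∉ Z then ∑ z ∈ Z, x z w else 0)
          else if w ∈ Z then (if w = uZ then ∑ z ∈ Z, x u z else 0)
          else x u w)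
        (fun u => if u = uZ then Z.inf' hZne p else if u ∈ Z then 1 else p u)) ∧
    ((∑ u, ∑ w, cbar u w *
        (if u ∈ Z then (if u = uZ ∧ w ∉ Z then ∑ z ∈ Z, x z w else 0)
         else if w ∈ Z then (if w = uZ then ∑ z ∈ Z, x u z else 0)
         else x u w)) +
      ∑ u, πbar u * (if u = uZ then Z.inf' hZne p else if u ∈ Z then 1 else p u) ≤
        (∑ u, ∑ w, c u w * x u w) + ∑ u, π u * p u) ∧
    lpOpt Abar cbar πbar r ≤ lpOpt A c π r := by
  obtain ⟨hf1, hf2⟩ := lp_contract_key A Abar r uZ Z hZne c cbar π πbar hc hπ hrZ huZ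
    hAbar hcbar1 hcbar2 hcbar3 hπbar1 hπbar2 hπbar3 x p hfeas
  refine ⟨hf1, hf2, ?_⟩
  -- the contracted LP value set is bounded below by 0
  have hbdd : BddBelow {z : ℝ | ∃ x p, LPfeas Abar r x p ∧
      z = (∑ u, ∑ w, cbar u w * x u w) + ∑ u, πbar u * p u} := by
    refine ⟨0, ?_⟩
    rintro z ⟨x', p', ⟨hx0', hp0', hsupp', _, _⟩, rfl⟩
    have hterm : ∀ u w, 0 ≤ cbar u w * x' u w := by
      intro u w
      by_cases hA' : (u, w) ∈ Abar
      · refine mul_nonneg ?_ (hx0' u w)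
        rcases (hAbar u w).1 hA' with ⟨hu, hw, _⟩ | ⟨hu, rfl, z', hz', hA''⟩
          | ⟨rfl, hw, z', hz', hA''⟩
        · rw [hcbar1 u w hu hw]; exact hc u w
        · have hne' : (Z.filter fun z => (u, z) ∈ A).Nonempty :=
            ⟨z', Finset.mem_filter.2 ⟨hz', hA''⟩⟩
          rw [hcbar2 u hu hne']
          exact Finset.le_inf' hne' _ fun b hb => hc u b
        · have hne' : (Z.filter fun z => (z, w) ∈ A).Nonempty :=
            ⟨z', Finset.mem_filter.2 ⟨hz', hA''⟩⟩
          rw [hcbar3 w hw hne']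
          exact Finset.le_inf' hne' _ fun b hb => hc b w
      · rw [hsupp' u w hA', mul_zero]
    have hπb : ∀ u, 0 ≤ πbar u := by
      intro u
      by_cases hu : u ∈ Z
      · by_cases h' : u = uZ
        · subst h'; rw [hπbar1]; exact Finset.sum_nonneg fun z _ => hπ z
        · rw [hπbar3 u hu h']
      · rw [hπbar2 u hu]; exact hπ u
    exact add_nonneg
      (Finset.sum_nonneg fun u _ => Finset.sum_nonneg fun w _ => hterm u w)
      (Finset.sum_nonneg fun u _ => mul_nonneg (hπb u) (hp0' u))
  unfold lpOpt
  refine le_csInf ⟨_, x, p, hfeas, rfl⟩ ?_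
  rintro z ⟨x', p', hf', rfl⟩
  obtain ⟨hfb', hob'⟩ := lp_contract_key A Abar r uZ Z hZne c cbar π πbar hc hπ hrZ huZ
    hAbar hcbar1 hcbar2 hcbar3 hπbar1 hπbar2 hπbar3 x' p' hf'
  exact le_trans (csInf_le hbdd ⟨xbar uZ Z x', pbar uZ Z hZne p', hfb', rfl⟩) hob'
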